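/- Fix integers D ≥ 1 and r ≥ 3, and let i, j be integers with 0 ≤ i, j ≤ D and i + j ≥ D. Set α = D − i, β = D − j, η = i + j − D. Let Ṽ_{ij} ⊆ ℂ^𝕏 denote the span of all tensor-product vectors v(y) = Π_{k=1}^{D} v_k(y_k) for which there is a partition of {1,…,D} into sets S₀, S₁, S₂ with |S₀| = α, |S₁| = β, |S₂| = η such that v_k = δ₀ (the vector with a one in coordinate 0 and zeros elsewhere in ℂ^{Fin r}) for k ∈ S₀, v_k = 𝟙 (the all-ones vector on Fin r) for k ∈ S₁, and v_k(0) = 0 and Σ_{a ∈ Fin r} v_k(a) = 0 for k ∈ S₂. Then dim Ṽ_{ij} = binom(D,i)·binom(i,D−j)·(r−2)^{i+j−D}. -/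

import Mathlib

/-- The split-decomposition summand `Ṽ_{ij}` of the standard module of the Hamming graph
`H(D,r)`: the span of the tensor-product vectors `y ↦ Π_k v_k(y_k)` for which the index set
is partitioned into sets `S₀, S₁, S₂` of sizes `D−i, D−j, i+j−D` on which the factor `v_k`
is `δ₀`, the all-ones vector `𝟙`, and a vector vanishing at `0` with coordinate sum `0`,
respectively. -/
noncomputable def Vtilde (D r i j : ℕ) (hr : 3 ≤ r) :
    Submodule ℂ ((Fin D → Fin r) → ℂ) :=
  Submodule.span ℂ
    {v : (Fin D → Fin r) → ℂ |
      ∃ (vk : Fin D → Fin r → ℂ) (S₀ S₁ S₂ : Finset (Fin D)),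
        S₀ ∪ S₁ ∪ S₂ = Finset.univ ∧
        Disjoint S₀ S₁ ∧ Disjoint S₀ S₂ ∧ Disjoint S₁ S₂ ∧
        S₀.card = D - i ∧ S₁.card = D - j ∧ S₂.card = i + j - D ∧
        (∀ k ∈ S₀, vk k = fun a => if a = (⟨0, by omega⟩ : Fin r) then 1 else 0) ∧
        (∀ k ∈ S₁, vk k = fun _ => 1) ∧
        (∀ k ∈ S₂, vk k (⟨0, by omega⟩ : Fin r) = 0 ∧ ∑ a : Fin r, vk k a = 0) ∧
        v = fun y => ∏ k : Fin D, vk k (y k)}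

open Finset

namespace S19
variable {r : ℕ}
def v0 (hr : 3 ≤ r) : Fin r := ⟨0, by omega⟩
def v1 (hr : 3 ≤ r) : Fin r := ⟨1, by omega⟩
lemma v1_ne_v0 (hr : 3 ≤ r) : v1 hr ≠ v0 hr := by
  simp [v0, v1, Fin.ext_iff]
noncomputable def bb (hr : 3 ≤ r) : Fin r → Fin r → ℂ := fun n a =>
  if n = v0 hr then (if a = v0 hr then 1 else 0)
  else if n = v1 hr then 1
  else (if a = n then 1 else 0) - (if a = v1 hr then 1 else 0)
noncomputable def bb' (hr : 3 ≤ r) : Fin r → Fin r → ℂ := fun a p =>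
  if a = v0 hr then (if p = v0 hr then 1 else 0)
  else (if p = v1 hr then ((r : ℂ) - 1)⁻¹ else -((r : ℂ) - 1)⁻¹) +
    (if a = v1 hr then 0 else (if a = p then 1 else 0))
lemma rest_mem (hr : 3 ≤ r) {a : Fin r} :
    a ∈ (univ.erase (v0 hr)).erase (v1 hr) ↔ a ≠ v1 hr ∧ a ≠ v0 hr := by
  simp [Finset.mem_erase, and_assoc]
lemma rest_card (hr : 3 ≤ r) :
    ((univ.erase (v0 hr)).erase (v1 hr)).card = r - 2 := by
  rw [Finset.card_erase_of_mem (Finset.mem_erase.mpr ⟨v1_ne_v0 hr, mem_univ _⟩),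
    Finset.card_erase_of_mem (mem_univ _)]
  simp
  omega
lemma sum_split (hr : 3 ≤ r) (f : Fin r → ℂ) :
    ∑ a, f a = f (v0 hr) + f (v1 hr) + ∑ a ∈ (univ.erase (v0 hr)).erase (v1 hr), f a := by
  rw [← Finset.add_sum_erase _ f (mem_univ (v0 hr)),
    ← Finset.add_sum_erase _ f (Finset.mem_erase.mpr ⟨v1_ne_v0 hr, mem_univ _⟩)]
  ring
lemma rsub_ne (hr : 3 ≤ r) : ((r : ℂ) - 1) ≠ 0 := by
  have : (r : ℂ) ≠ 1 := by norm_cast; omega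
  intro h; apply this; linear_combination h

lemma key (hr : 3 ≤ r) (n p : Fin r) :
    ∑ a, bb hr n a * bb' hr a p = if n = p then 1 else 0 := by
  by_cases hn0 : n = v0 hr
  · subst hn0
    simp only [bb, if_pos rfl, ite_mul, one_mul, zero_mul, Finset.sum_ite_eq',
      mem_univ, if_true]
    simp only [bb', if_pos rfl]
    simp [eq_comm]
  · by_cases hn1 : n = v1 hr
    · subst hn1
      have hbbv1 : ∀ a, bb hr (v1 hr) a = 1 := fun a => by simp [bb, v1_ne_v0 hr]
      simp only [hbbv1, one_mul]
      have hrest : ∀ a ∈ (univ.erase (v0 hr)).erase (v1 hr),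
          bb' hr a p = (if p = v1 hr then ((r:ℂ)-1)⁻¹ else -((r:ℂ)-1)⁻¹)
            + (if a = p then 1 else 0) := by
        intro a ha
        obtain ⟨h1, h0⟩ := (rest_mem hr).mp ha
        simp [bb', h0, h1]
      rw [sum_split hr, Finset.sum_congr rfl hrest, Finset.sum_add_distrib,
        Finset.sum_const, rest_card hr, Finset.sum_ite_eq']
      simp only [bb', if_pos rfl, if_neg (v1_ne_v0 hr)]
      rw [nsmul_eq_mul, Nat.cast_sub (by omega : 2 ≤ r)]
      by_cases hp0 : p = v0 hr
      · subst hp0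
        have e1 : ¬ v1 hr = v0 hr := v1_ne_v0 hr
        have e2 : v0 hr ∉ (univ.erase (v0 hr)).erase (v1 hr) := by simp [rest_mem]
        have e1' : ¬ v0 hr = v1 hr := fun h => e1 h.symm
        simp only [e1, e1', e2, if_true, if_false, ite_true, ite_false, if_pos rfl, if_neg e1]
        field_simp [rsub_ne hr]
        ring
      · by_cases hp1 : p = v1 hr
        · subst hp1
          have e1 : ¬ v0 hr = v1 hr := (v1_ne_v0 hr).symm
          have e2 : v1 hr ∉ (univ.erase (v0 hr)).erase (v1 hr) := by simp [rest_mem]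
          simp only [hp0, e1, e2, if_true, if_false, ite_true, ite_false, if_pos rfl]
          field_simp [rsub_ne hr]
          ring
        · have e1 : ¬ v0 hr = p := fun h => hp0 h.symm
          have e2 : ¬ v1 hr = p := fun h => hp1 h.symm
          have e3 : p ∈ (univ.erase (v0 hr)).erase (v1 hr) := (rest_mem hr).mpr ⟨hp1, hp0⟩
          simp only [hp0, hp1, e1, e2, e3, if_true, if_false, ite_true, ite_false]
          field_simp [rsub_ne hr]
          ring
    · simp only [bb, if_neg hn0, if_neg hn1, sub_mul, Finset.sum_sub_distrib,
        ite_mul, one_mul, zero_mul, Finset.sum_ite_eq', mem_univ, if_true]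
      simp only [bb', if_neg hn0, if_neg (v1_ne_v0 hr), if_pos rfl, if_neg hn1]
      simp

noncomputable def BB (D : ℕ) (hr : 3 ≤ r) : (Fin D → Fin r) → (Fin D → Fin r) → ℂ :=
  fun g y => ∏ k, bb hr (g k) (y k)

lemma keyBB {D : ℕ} (hr : 3 ≤ r) (g h : Fin D → Fin r) :
    ∑ y : Fin D → Fin r, BB D hr g y * ∏ k, bb' hr (y k) (h k) = if g = h then 1 else 0 := by
  have e : ∀ y : Fin D → Fin r, BB D hr g y * ∏ k, bb' hr (y k) (h k)
      = ∏ k, (bb hr (g k) (y k) * bb' hr (y k) (h k)) := by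
    intro y; rw [BB, ← Finset.prod_mul_distrib]
  simp only [e]
  rw [← Fintype.piFinset_univ, ← Finset.prod_univ_sum (fun _ => (univ : Finset (Fin r))) (fun k a => bb hr (g k) a * bb' hr a (h k))]
  simp only [key hr]
  rw [Finset.prod_boole]
  simp [funext_iff]

lemma BB_li (D : ℕ) (hr : 3 ≤ r) : LinearIndependent ℂ (BB D hr) := by
  rw [Fintype.linearIndependent_iff]
  intro c hc h
  have hc' : ∀ y, ∑ g, c g * BB D hr g y = 0 := by
    intro y
    have := congrFun hc y
    simpa [Finset.sum_apply] using this
  have e1 : ∑ g, c g * (if g = h then 1 else 0) = c h := by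
    simp [mul_ite, Finset.sum_ite_eq']
  rw [← e1]
  calc ∑ g, c g * (if g = h then 1 else 0)
      = ∑ g, c g * ∑ y : Fin D → Fin r, BB D hr g y * ∏ k, bb' hr (y k) (h k) := by
        simp_rw [keyBB hr]
    _ = ∑ y : Fin D → Fin r, (∑ g, c g * BB D hr g y) * ∏ k, bb' hr (y k) (h k) := by
        simp_rw [Finset.mul_sum, ← mul_assoc]
        rw [Finset.sum_comm]
        simp_rw [← Finset.sum_mul]
    _ = 0 := by simp [hc']


def TT (D i j : ℕ) (hr : 3 ≤ r) : Finset (Fin D → Fin r) :=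
  univ.filter fun g => (univ.filter fun k => g k = v0 hr).card = D - i ∧
    (univ.filter fun k => g k = v1 hr).card = D - j

lemma expand {D : ℕ} (hr : 3 ≤ r) (c : Fin D → Fin r → ℂ) :
    (fun y : Fin D → Fin r => ∏ k, ∑ m, c k m * bb hr m (y k))
      = ∑ g : Fin D → Fin r, (∏ k, c k (g k)) • BB D hr g := by
  funext y
  rw [Finset.sum_apply]
  simp only [Pi.smul_apply, smul_eq_mul, BB]
  rw [Finset.prod_univ_sum (fun _ => (univ : Finset (Fin r))) (fun k m => c k m * bb hr m (y k)),
    Fintype.piFinset_univ]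
  exact Finset.sum_congr rfl fun g _ => Finset.prod_mul_distrib


lemma span_eq (D i j : ℕ) (hr : 3 ≤ r) (hi : i ≤ D) (hj : j ≤ D) (hij : D ≤ i + j) :
    Vtilde D r i j hr
      = Submodule.span ℂ (BB D hr '' (TT D i j hr : Set (Fin D → Fin r))) := by
  classical
  apply le_antisymm
  · rw [Vtilde, Submodule.span_le]
    rintro v ⟨vk, S₀, S₁, S₂, hu, d01, d02, d12, c0, c1, c2, h0, h1, h2, rfl⟩
    set c : Fin D → Fin r → ℂ := fun k m =>
      if k ∈ S₀ then (if m = v0 hr then 1 else 0)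
      else if k ∈ S₁ then (if m = v1 hr then 1 else 0)
      else if m = v0 hr ∨ m = v1 hr then 0 else vk k m with hc
    have hmem : ∀ k : Fin D, k ∈ S₀ ∨ k ∈ S₁ ∨ k ∈ S₂ := by
      intro k
      have : k ∈ S₀ ∪ S₁ ∪ S₂ := hu ▸ mem_univ k
      simpa [Finset.mem_union, or_assoc] using this
    have hvk : ∀ k, vk k = fun a => ∑ m, c k m * bb hr m a := by
      intro k
      by_cases hk0 : k ∈ S₀
      · rw [h0 k hk0]
        funext a
        simp only [hc, if_pos hk0, ite_mul, one_mul, zero_mul, Finset.sum_ite_eq',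
          mem_univ, if_true]
        simp [bb, v0]
        by_cases h : a = (⟨0, by omega⟩ : Fin r) <;> simp [h]
      · by_cases hk1 : k ∈ S₁
        · rw [h1 k hk1]
          funext a
          simp only [hc, if_neg hk0, if_pos hk1, ite_mul, one_mul, zero_mul,
            Finset.sum_ite_eq', mem_univ, if_true]
          simp [bb, v1_ne_v0 hr]
        · have hk2 : k ∈ S₂ := ((hmem k).resolve_left hk0).resolve_left hk1
          obtain ⟨hz, hs⟩ := h2 k hk2
          funext a
          rw [sum_split hr (fun m => c k m * bb hr m a)]
          have e0 : c k (v0 hr) = 0 := by simp [hc, hk0, hk1]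
          have e1 : c k (v1 hr) = 0 := by simp [hc, hk0, hk1]
          rw [e0, e1, zero_mul, zero_mul, zero_add, zero_add]
          have hrest : ∀ m ∈ (univ.erase (v0 hr)).erase (v1 hr),
              c k m * bb hr m a
                = vk k m * (if a = m then 1 else 0)
                  - vk k m * (if a = v1 hr then 1 else 0) := by
            intro m hm
            obtain ⟨m1, m0⟩ := (rest_mem hr).mp hm
            simp [hc, hk0, hk1, m0, m1, bb, mul_sub]
          rw [Finset.sum_congr rfl hrest, Finset.sum_sub_distrib]
          have hsum1 : ∑ m ∈ (univ.erase (v0 hr)).erase (v1 hr),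
              vk k m * (if a = m then 1 else 0)
              = if a ∈ (univ.erase (v0 hr)).erase (v1 hr) then vk k a else 0 := by
            simp only [mul_ite, mul_one, mul_zero]
            rw [Finset.sum_ite_eq]
          have hrest_sum : ∑ m ∈ (univ.erase (v0 hr)).erase (v1 hr), vk k m
              = - vk k (v1 hr) := by
            have hz' : vk k (v0 hr) = 0 := hz
            have h' := (sum_split hr (vk k)).symm.trans hs
            rw [hz', zero_add] at h'
            linear_combination h'
          rw [hsum1, ← Finset.sum_mul, hrest_sum]
          by_cases ha0 : a = v0 hr
          · subst ha0
            rw [if_neg (by simp [rest_mem]), if_neg (v1_ne_v0 hr).symm]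
            have hz' : vk k (v0 hr) = 0 := hz
            rw [hz']
            ring
          · by_cases ha1 : a = v1 hr
            · subst ha1
              rw [if_neg (by simp [rest_mem]), if_pos rfl]
              ring
            · rw [if_pos ((rest_mem hr).mpr ⟨ha1, ha0⟩), if_neg ha1]
              ring
    have hveq : (fun y => ∏ k, vk k (y k))
        = ∑ g : Fin D → Fin r, (∏ k, c k (g k)) • BB D hr g := by
      rw [← expand hr c]
      funext y
      exact Finset.prod_congr rfl fun k _ => by rw [hvk k]
    rw [SetLike.mem_coe, hveq]
    apply Submodule.sum_mem
    intro g _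
    by_cases hg : (∏ k, c k (g k)) = 0
    · rw [hg, zero_smul]; exact Submodule.zero_mem _
    · refine Submodule.smul_mem _ _ (Submodule.subset_span ?_)
      refine ⟨g, ?_, rfl⟩
      have hgk : ∀ k, c k (g k) ≠ 0 := fun k h => hg (Finset.prod_eq_zero (mem_univ k) h)
      have hg0 : ∀ k, k ∈ S₀ → g k = v0 hr := by
        intro k hk; by_contra h; exact hgk k (by simp [hc, hk, h])
      have hg1 : ∀ k, k ∈ S₁ → g k = v1 hr := by
        intro k hk
        have hk0 : k ∉ S₀ := fun h => (Finset.disjoint_left.mp d01) h hk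
        by_contra h; exact hgk k (by simp [hc, hk0, hk, h])
      have hg2 : ∀ k, k ∈ S₂ → g k ≠ v0 hr ∧ g k ≠ v1 hr := by
        intro k hk
        have hk0 : k ∉ S₀ := fun h => (Finset.disjoint_left.mp d02) h hk
        have hk1 : k ∉ S₁ := fun h => (Finset.disjoint_left.mp d12) h hk
        constructor <;> intro h <;> exact hgk k (by simp [hc, hk0, hk1, h])
      have hf0 : (univ.filter fun k => g k = v0 hr) = S₀ := by
        ext k
        simp only [Finset.mem_filter, mem_univ, true_and]
        constructor
        · intro h
          rcases hmem k with hk | hk | hk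
          · exact hk
          · exact absurd ((hg1 k hk).symm.trans h) (v1_ne_v0 hr)
          · exact absurd h (hg2 k hk).1
        · exact hg0 k
      have hf1 : (univ.filter fun k => g k = v1 hr) = S₁ := by
        ext k
        simp only [Finset.mem_filter, mem_univ, true_and]
        constructor
        · intro h
          rcases hmem k with hk | hk | hk
          · exact absurd ((hg0 k hk).symm.trans h).symm (v1_ne_v0 hr)
          · exact hk
          · exact absurd h (hg2 k hk).2
        · exact hg1 k
      simp only [TT, Finset.coe_filter, Set.mem_setOf_eq, mem_univ, true_and]
      exact ⟨by rw [hf0, c0], by rw [hf1, c1]⟩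
  · rw [Submodule.span_le]
    rintro w ⟨g, hg, rfl⟩
    rw [Finset.mem_coe, TT, Finset.mem_filter] at hg
    obtain ⟨-, hg0, hg1⟩ := hg
    refine Submodule.subset_span ?_
    refine ⟨fun k => bb hr (g k),
      univ.filter (fun k => g k = v0 hr),
      univ.filter (fun k => g k = v1 hr),
      univ.filter (fun k => ¬(g k = v0 hr ∨ g k = v1 hr)), ?_, ?_, ?_, ?_, ?_, ?_, ?_, ?_, ?_, ?_, rfl⟩
    · ext k
      simp only [Finset.mem_union, Finset.mem_filter, mem_univ, true_and]
      tauto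
    · rw [Finset.disjoint_left]
      intro k hk hk'
      simp only [Finset.mem_filter, mem_univ, true_and] at hk hk'
      exact (v1_ne_v0 hr).symm (hk.symm.trans hk')
    · rw [Finset.disjoint_left]
      intro k hk hk'
      simp only [Finset.mem_filter, mem_univ, true_and] at hk hk'
      tauto
    · rw [Finset.disjoint_left]
      intro k hk hk'
      simp only [Finset.mem_filter, mem_univ, true_and] at hk hk'
      tauto
    · exact hg0
    · exact hg1
    · have hsplit := Finset.card_filter_add_card_filter_not
        (s := (univ : Finset (Fin D))) (p := fun k => g k = v0 hr ∨ g k = v1 hr)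
      rw [Finset.filter_or] at hsplit
      rw [Finset.card_union_of_disjoint (by
        rw [Finset.disjoint_left]
        intro k hk hk'
        simp only [Finset.mem_filter, mem_univ, true_and] at hk hk'
        exact (v1_ne_v0 hr).symm (hk.symm.trans hk'))] at hsplit
      rw [hg0, hg1, Finset.card_univ, Fintype.card_fin] at hsplit
      omega
    · intro k hk
      simp only [Finset.mem_filter, mem_univ, true_and] at hk
      simp only [hk]
      funext a
      simp [bb, v0]
      by_cases h : a = (⟨0, by omega⟩ : Fin r) <;> simp [h]
    · intro k hk
      simp only [Finset.mem_filter, mem_univ, true_and] at hk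
      simp only [hk]
      funext a
      simp [bb, v1_ne_v0 hr]
    · intro k hk
      simp only [Finset.mem_filter, mem_univ, true_and] at hk
      push_neg at hk
      obtain ⟨hk0, hk1⟩ := hk
      have e0 : ¬ v0 hr = g k := fun h => hk0 h.symm
      constructor
      · show bb hr (g k) (v0 hr) = 0
        simp [bb, hk0, hk1, (v1_ne_v0 hr).symm, e0]
      · show ∑ a : Fin r, bb hr (g k) a = 0
        simp only [bb, if_neg hk0, if_neg hk1]
        rw [Finset.sum_sub_distrib]
        simp [Finset.sum_ite_eq']


lemma arith1 {D i j : ℕ} (hi : i ≤ D) (hj : j ≤ D) (hij : D ≤ i + j) :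
    D - (D - i + (D - j)) = i + j - D := by omega

lemma arith2 {D i : ℕ} (hi : i ≤ D) : D - (D - i) = i := by omega

lemma card_TT (D i j : ℕ) (hr : 3 ≤ r) (hi : i ≤ D) (hj : j ≤ D) (hij : D ≤ i + j) :
    (TT D i j hr).card = D.choose i * i.choose (D - j) * (r - 2) ^ (i + j - D) := by
  classical
  set Q : Finset (Finset (Fin D) × Finset (Fin D)) :=
    ((univ.powersetCard (D - i)) ×ˢ (univ.powersetCard (D - j))).filter
      fun p => Disjoint p.1 p.2 with hQ
  have step1 : (TT D i j hr).card = ∑ p ∈ Q, ((TT D i j hr).filter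
      (fun g => ((univ.filter fun k => g k = v0 hr),
        (univ.filter fun k => g k = v1 hr)) = p)).card := by
    apply Finset.card_eq_sum_card_fiberwise
    intro g hg
    simp only [Finset.mem_coe, TT, Finset.mem_filter] at hg
    obtain ⟨-, hg0, hg1⟩ := hg
    rw [Finset.mem_coe, hQ, Finset.mem_filter, Finset.mem_product]
    refine ⟨⟨?_, ?_⟩, ?_⟩
    · rw [Finset.mem_powersetCard]; exact ⟨Finset.subset_univ _, hg0⟩
    · rw [Finset.mem_powersetCard]; exact ⟨Finset.subset_univ _, hg1⟩
    · rw [Finset.disjoint_left]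
      intro k hk hk'
      simp only [Finset.mem_filter, mem_univ, true_and] at hk hk'
      exact (v1_ne_v0 hr).symm (hk.symm.trans hk')
  have step2 : ∀ p ∈ Q, ((TT D i j hr).filter
      (fun g => ((univ.filter fun k => g k = v0 hr),
        (univ.filter fun k => g k = v1 hr)) = p)).card = (r - 2) ^ (i + j - D) := by
    intro p hp
    rw [hQ, Finset.mem_filter, Finset.mem_product, Finset.mem_powersetCard,
      Finset.mem_powersetCard] at hp
    obtain ⟨⟨⟨-, hp1⟩, -, hp2⟩, hdisj⟩ := hp
    have hset : (TT D i j hr).filter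
        (fun g => ((univ.filter fun k => g k = v0 hr),
          (univ.filter fun k => g k = v1 hr)) = p)
        = Fintype.piFinset (fun k => if k ∈ p.1 then {v0 hr}
            else if k ∈ p.2 then {v1 hr} else (univ \ {v0 hr, v1 hr})) := by
      ext g
      rw [Finset.mem_filter, Fintype.mem_piFinset, TT, Finset.mem_filter]
      constructor
      · rintro ⟨-, hfib⟩
        have hf0 : univ.filter (fun k => g k = v0 hr) = p.1 := congrArg Prod.fst hfib
        have hf1 : univ.filter (fun k => g k = v1 hr) = p.2 := congrArg Prod.snd hfib
        intro k
        by_cases hk1 : k ∈ p.1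
        · rw [if_pos hk1]
          rw [← hf0] at hk1
          simp only [Finset.mem_filter, mem_univ, true_and] at hk1
          simp [hk1]
        · rw [if_neg hk1]
          by_cases hk2 : k ∈ p.2
          · rw [if_pos hk2]
            rw [← hf1] at hk2
            simp only [Finset.mem_filter, mem_univ, true_and] at hk2
            simp [hk2]
          · rw [if_neg hk2]
            rw [← hf0] at hk1
            rw [← hf1] at hk2
            simp only [Finset.mem_filter, mem_univ, true_and] at hk1 hk2
            simp [hk1, hk2]
      · intro hg
        have hf0 : univ.filter (fun k => g k = v0 hr) = p.1 := by
          ext k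
          simp only [Finset.mem_filter, mem_univ, true_and]
          have hgk := hg k
          constructor
          · intro h
            by_contra hk1
            rw [if_neg hk1] at hgk
            by_cases hk2 : k ∈ p.2
            · rw [if_pos hk2] at hgk
              simp only [Finset.mem_singleton] at hgk
              exact v1_ne_v0 hr (hgk.symm.trans h)
            · rw [if_neg hk2] at hgk
              simp only [Finset.mem_sdiff, Finset.mem_insert, Finset.mem_singleton,
                not_or] at hgk
              exact hgk.2.1 h
          · intro hk1
            rw [if_pos hk1] at hgk
            simpa using hgk
        have hf1 : univ.filter (fun k => g k = v1 hr) = p.2 := by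
          ext k
          simp only [Finset.mem_filter, mem_univ, true_and]
          have hgk := hg k
          constructor
          · intro h
            by_contra hk2
            by_cases hk1 : k ∈ p.1
            · rw [if_pos hk1] at hgk
              simp only [Finset.mem_singleton] at hgk
              exact v1_ne_v0 hr (h.symm.trans hgk)
            · rw [if_neg hk1, if_neg hk2] at hgk
              simp only [Finset.mem_sdiff, Finset.mem_insert, Finset.mem_singleton,
                not_or] at hgk
              exact hgk.2.2 h
          · intro hk2
            have hk1 : k ∉ p.1 := fun h => (Finset.disjoint_left.mp hdisj) h hk2
            rw [if_neg hk1, if_pos hk2] at hgk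
            simpa using hgk
        exact ⟨⟨mem_univ g, by rw [hf0, hp1], by rw [hf1, hp2]⟩, by rw [hf0, hf1]⟩
    rw [hset, Fintype.card_piFinset]
    have hone : ∀ k ∈ p.1 ∪ p.2, (if k ∈ p.1 then ({v0 hr} : Finset (Fin r))
        else if k ∈ p.2 then {v1 hr} else (univ \ {v0 hr, v1 hr})).card = 1 := by
      intro k hk
      rcases Finset.mem_union.mp hk with hk1 | hk2
      · rw [if_pos hk1]; simp
      · have hk1 : k ∉ p.1 := fun h => (Finset.disjoint_left.mp hdisj) h hk2
        rw [if_neg hk1, if_pos hk2]; simp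
    have hbig : ∀ k ∈ (p.1 ∪ p.2)ᶜ, (if k ∈ p.1 then ({v0 hr} : Finset (Fin r))
        else if k ∈ p.2 then {v1 hr} else (univ \ {v0 hr, v1 hr})).card = r - 2 := by
      intro k hk
      rw [Finset.mem_compl, Finset.mem_union, not_or] at hk
      rw [if_neg hk.1, if_neg hk.2]
      rw [Finset.card_sdiff_of_subset (Finset.subset_univ _), Finset.card_univ, Fintype.card_fin,
        Finset.card_insert_of_notMem (by simp [(v1_ne_v0 hr).symm]), Finset.card_singleton]
    rw [← Finset.prod_mul_prod_compl (p.1 ∪ p.2)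
      (fun k => (if k ∈ p.1 then ({v0 hr} : Finset (Fin r))
        else if k ∈ p.2 then {v1 hr} else (univ \ {v0 hr, v1 hr})).card)]
    rw [Finset.prod_congr rfl hone, Finset.prod_congr rfl hbig]
    rw [Finset.prod_const, Finset.prod_const, one_pow, one_mul]
    rw [Finset.card_compl, Finset.card_union_of_disjoint hdisj, hp1, hp2,
      Fintype.card_fin]
    rw [arith1 hi hj hij]
  have estep : ∑ p ∈ Q, ((TT D i j hr).filter
      (fun g => ((univ.filter fun k => g k = v0 hr),
        (univ.filter fun k => g k = v1 hr)) = p)).card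
      = ∑ _p ∈ Q, (r - 2) ^ (i + j - D) := Finset.sum_congr rfl step2
  rw [step1, estep, Finset.sum_const, smul_eq_mul]
  have hQcard : Q.card = D.choose i * i.choose (D - j) := by
    have q1 : Q.card = ∑ S₀ ∈ univ.powersetCard (D - i),
        (Q.filter (fun p => p.1 = S₀)).card := by
      apply Finset.card_eq_sum_card_fiberwise
      intro p hp
      simp only [Finset.mem_coe, hQ, Finset.mem_filter, Finset.mem_product] at hp
      exact hp.1.1
    have q2 : ∀ S₀ ∈ univ.powersetCard (D - i),
        (Q.filter (fun p => p.1 = S₀)).card = i.choose (D - j) := by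
      intro S₀ hS₀
      rw [Finset.mem_powersetCard] at hS₀
      have himg : Q.filter (fun p => p.1 = S₀)
          = (S₀ᶜ.powersetCard (D - j)).image (fun S₁ => (S₀, S₁)) := by
        ext p
        rw [Finset.mem_filter, Finset.mem_image, hQ, Finset.mem_filter,
          Finset.mem_product, Finset.mem_powersetCard, Finset.mem_powersetCard]
        constructor
        · rintro ⟨⟨⟨-, ⟨-, hc2⟩⟩, hd⟩, rfl⟩
          refine ⟨p.2, ?_, rfl⟩
          rw [Finset.mem_powersetCard]
          refine ⟨?_, hc2⟩
          intro x hx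
          rw [Finset.mem_compl]
          exact Finset.disjoint_right.mp hd hx
        · rintro ⟨S₁, hS₁, rfl⟩
          rw [Finset.mem_powersetCard] at hS₁
          refine ⟨⟨⟨?_, ?_⟩, ?_⟩, rfl⟩
          · exact ⟨Finset.subset_univ _, hS₀.2⟩
          · exact ⟨Finset.subset_univ _, hS₁.2⟩
          · rw [Finset.disjoint_right]
            intro x hx
            have := hS₁.1 hx
            rwa [Finset.mem_compl] at this
      rw [himg]
      rw [Finset.card_image_of_injective _
        (fun a b h => ((Prod.mk.injEq _ _ _ _).mp h).2)]
      rw [Finset.card_powersetCard, Finset.card_compl, Fintype.card_fin, hS₀.2]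
      rw [arith2 hi]
    have eq2 : ∑ S₀ ∈ univ.powersetCard (D - i), (Q.filter (fun p => p.1 = S₀)).card
        = ∑ _S₀ ∈ univ.powersetCard (D - i), i.choose (D - j) := Finset.sum_congr rfl q2
    rw [q1, eq2, Finset.sum_const, smul_eq_mul,
      Finset.card_powersetCard, Finset.card_univ, Fintype.card_fin,
      Nat.choose_symm hi]
  rw [hQcard]
end S19

theorem stmt19 (D r : ℕ) (hD : 1 ≤ D) (hr : 3 ≤ r)
    (i j : ℕ) (hi : i ≤ D) (hj : j ≤ D) (hij : D ≤ i + j) :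
    Module.finrank ℂ ↥(Vtilde D r i j hr) =
      Nat.choose D i * Nat.choose i (D - j) * (r - 2) ^ (i + j - D) := by
  classical
  rw [S19.span_eq D i j hr hi hj hij]
  have hli : LinearIndependent ℂ
      (fun t : {x // x ∈ S19.TT D i j hr} => S19.BB D hr t.1) :=
    (S19.BB_li D hr).comp Subtype.val Subtype.val_injective
  have himg : S19.BB D hr '' (S19.TT D i j hr : Set (Fin D → Fin r))
      = Set.range (fun t : {x // x ∈ S19.TT D i j hr} => S19.BB D hr t.1) := by
    rw [Set.image_eq_range]
    rfl
  rw [himg, finrank_span_eq_card hli, Fintype.card_coe]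
  exact S19.card_TT D i j hr hi hj hij
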